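/- Define a relation on algebraic numbers by α ≼ β if and only if there exists a ring homomorphism σ from ℚ̄ to ℚ̄ and a natural number n such that σ(β) = α + n. Then ≼ induces a partial order on the set of Galois-conjugacy classes of algebraic numbers; in particular if α ≼ β and β ≼ α then α and β are Galois conjugate. -/

import Mathlib

/-- The relation `α ≼ β ↔ ∃ σ : ℚ̄ →+* ℚ̄, ∃ n : ℕ, σ β = α + n` is antisymmetric
up to Galois conjugacy: if `α ≼ β` and `β ≼ α`, then `α` and `β` are Galois conjugate. -/
theorem stmt_2 (α β : AlgebraicClosure ℚ)
    (h₁ : ∃ (σ : AlgebraicClosure ℚ →+* AlgebraicClosure ℚ) (n : ℕ),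
      σ β = α + (n : AlgebraicClosure ℚ))
    (h₂ : ∃ (σ : AlgebraicClosure ℚ →+* AlgebraicClosure ℚ) (n : ℕ),
      σ α = β + (n : AlgebraicClosure ℚ)) :
    ∃ σ : AlgebraicClosure ℚ →+* AlgebraicClosure ℚ, σ α = β := by
  obtain ⟨σ, n, hσ⟩ := h₁
  obtain ⟨τ, m, hτ⟩ := h₂
  -- Key claim: n + m = 0.
  have key : n + m = 0 := by
    by_contra hk
    -- ρ = τ ∘ σ as a ℚ-algebra hom
    set ρ : AlgebraicClosure ℚ →ₐ[ℚ] AlgebraicClosure ℚ :=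
      RingHom.equivRatAlgHom _ _ (τ.comp σ) with hρdef
    have hρ : ρ β = β + ((n + m : ℕ) : AlgebraicClosure ℚ) := by
      have : ρ β = τ (σ β) := rfl
      rw [this, hσ, map_add, hτ, map_natCast]
      push_cast
      ring
    have halg : IsAlgebraic ℚ β := (AlgebraicClosure.isAlgebraic ℚ).isAlgebraic β
    set p := (minpoly ℚ β).map (algebraMap ℚ (AlgebraicClosure ℚ)) with hpdef
    have hp : p ≠ 0 := by
      refine Polynomial.map_ne_zero ?_
      exact minpoly.ne_zero halg.isIntegral
    have hroot : ∀ j : ℕ, p.IsRoot (β + ((j * (n + m) : ℕ) : AlgebraicClosure ℚ)) := by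
      intro j
      induction j with
      | zero =>
        simpa [hpdef, Polynomial.IsRoot, Polynomial.eval_map, ← Polynomial.aeval_def]
          using minpoly.aeval ℚ β
      | succ j ih =>
        have h2 : Polynomial.aeval (ρ (β + ((j * (n + m) : ℕ) : AlgebraicClosure ℚ)))
            (minpoly ℚ β) = 0 := by
          rw [Polynomial.aeval_algHom_apply]
          have : Polynomial.aeval (β + ((j * (n + m) : ℕ) : AlgebraicClosure ℚ))
              (minpoly ℚ β) = 0 := by
            simpa [hpdef, Polynomial.IsRoot, Polynomial.eval_map, ← Polynomial.aeval_def]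
              using ih
          rw [this, map_zero]
        have h3 : ρ (β + ((j * (n + m) : ℕ) : AlgebraicClosure ℚ))
            = β + (((j + 1) * (n + m) : ℕ) : AlgebraicClosure ℚ) := by
          rw [map_add, hρ, map_natCast]
          push_cast
          ring
        rw [h3] at h2
        simpa [hpdef, Polynomial.IsRoot, Polynomial.eval_map, ← Polynomial.aeval_def]
          using h2
    have hfin : Set.Finite {x | p.IsRoot x} := Polynomial.finite_setOf_isRoot hp
    have hinj : Function.Injective
        (fun j : ℕ => β + ((j * (n + m) : ℕ) : AlgebraicClosure ℚ)) := by
      intro i j hij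
      simp only [add_right_inj, Nat.cast_inj] at hij
      exact Nat.eq_of_mul_eq_mul_right (Nat.pos_of_ne_zero hk) hij
    exact (Set.infinite_of_injective_forall_mem hinj hroot) hfin
  have hm : m = 0 := Nat.eq_zero_of_add_eq_zero_left key
  exact ⟨τ, by rw [hτ, hm, Nat.cast_zero, add_zero]⟩
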